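/- Fix ε ∈ (0, 1/4) and integers d, k with d = ⌊(k/(6ε))²⌋ + 1 and d ≥ 2. Consider the points v_j = e_d + e_j/√2 in ℝ^d for j = 1, …, d−1, the hinge-type loss g with g(r) = 1 − r for r ∈ [0,1] and g(r) = 0 for r > 1, and regularizer R(x) = ‖x‖₂². Let x = e_d − (∑_{i=1}^{(d−1)/2} e_i)/√((d−1)/2) (assuming d−1 even). Then (i) R(x) = 2; (ii) ⟨v_j, x⟩ = 1 for j > (d−1)/2 and ⟨v_j, x⟩ = 1 − 1/√(d−1) for j ≤ (d−1)/2; (iii) (1/(d−1))∑_{j=1}^{d−1} g(⟨v_j, x⟩) = 1/(2√(d−1)); and (iv) (1/(d−1))∑_j g(⟨v_j, x⟩) > ε·((1/(d−1))∑_j g(⟨v_j, x⟩) + R(x)/k). -/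

import Mathlib

lemma aux_sum_ite_lt (n c : ℕ) (hc : c ≤ n) (r : ℝ) :
    ∑ i : Fin n, (if (i:ℕ) < c then r else 0) = c * r := by
  rw [Fin.sum_univ_eq_sum_range (fun i => if i < c then r else 0) n,
    Finset.sum_ite, Finset.sum_const, Finset.sum_const]
  have h : (Finset.range n).filter (· < c) = Finset.range c := by
    ext a; simp; omega
  simp [h]

lemma aux_sum_ite_eq (d c : ℕ) (hc : c < d) (f : Fin d → ℝ) :
    ∑ i : Fin d, (if (i:ℕ) = c then f i else 0) = f ⟨c, hc⟩ := by
  rw [Finset.sum_eq_single (⟨c, hc⟩ : Fin d)]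
  · simp
  · intro b _ hb; rw [if_neg]; simpa [Fin.ext_iff] using hb
  · simp

theorem stmt_18 (ε k : ℝ) (hε : 0 < ε) (hε' : ε < 1 / 4) (hk : 0 < k)
    (d : ℕ) (hd2 : 2 ≤ d) (hdval : d = Nat.floor ((k / (6 * ε)) ^ 2) + 1)
    (hdev : Even (d - 1))
    (g : ℝ → ℝ) (hg1 : ∀ r ∈ Set.Icc (0 : ℝ) 1, g r = 1 - r)
    (hg2 : ∀ r : ℝ, 1 < r → g r = 0)
    (v : Fin (d - 1) → EuclideanSpace ℝ (Fin d))
    (hv : ∀ j : Fin (d - 1), ∀ i : Fin d,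
      v j i = (if (i : ℕ) = d - 1 then (1 : ℝ) else 0) +
        (if (i : ℕ) = (j : ℕ) then (Real.sqrt 2)⁻¹ else 0))
    (x : EuclideanSpace ℝ (Fin d))
    (hx : ∀ i : Fin d, x i =
      if (i : ℕ) = d - 1 then (1 : ℝ)
      else if (i : ℕ) < (d - 1) / 2 then -(1 / Real.sqrt (((d : ℝ) - 1) / 2))
      else 0) :
    ‖x‖ ^ 2 = 2 ∧
    (∀ j : Fin (d - 1),
      ((d - 1) / 2 ≤ (j : ℕ) → (inner ℝ (v j) x : ℝ) = 1) ∧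
      ((j : ℕ) < (d - 1) / 2 → (inner ℝ (v j) x : ℝ) = 1 - 1 / Real.sqrt ((d : ℝ) - 1))) ∧
    (1 / ((d : ℝ) - 1)) * ∑ j : Fin (d - 1), g (inner ℝ (v j) x : ℝ)
        = 1 / (2 * Real.sqrt ((d : ℝ) - 1)) ∧
    (1 / ((d : ℝ) - 1)) * ∑ j : Fin (d - 1), g (inner ℝ (v j) x : ℝ) >
      ε * ((1 / ((d : ℝ) - 1)) * ∑ j : Fin (d - 1), g (inner ℝ (v j) x : ℝ) + ‖x‖ ^ 2 / k) := by
  obtain ⟨m, hm⟩ := hdev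
  have hm1 : 1 ≤ m := by omega
  have hdiv : (d - 1) / 2 = m := by omega
  have hmlt : m < d - 1 := by omega
  have hd1lt : d - 1 < d := by omega
  have hdR : ((d : ℝ) - 1) = 2 * m := by
    have h : d = 2 * m + 1 := by omega
    rw [h]; push_cast; ring
  set sm := Real.sqrt (((d : ℝ) - 1) / 2) with hsm_def
  set sd := Real.sqrt ((d : ℝ) - 1) with hsd_def
  have hmR : (0:ℝ) < m := by exact_mod_cast hm1
  have hsmm : ((d:ℝ) - 1) / 2 = (m:ℝ) := by rw [hdR]; ring
  have hsm_pos : 0 < sm := Real.sqrt_pos.2 (by rw [hsmm]; exact hmR)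
  have hsm_sq : sm * sm = m := by
    rw [hsm_def, Real.mul_self_sqrt (by rw [hsmm]; positivity), hsmm]
  have hsd_pos : 0 < sd := Real.sqrt_pos.2 (by rw [hdR]; positivity)
  have hsd_sq : sd * sd = 2 * m := by
    rw [hsd_def, Real.mul_self_sqrt (by rw [hdR]; positivity), hdR]
  have hm1R : (1:ℝ) ≤ m := by exact_mod_cast hm1
  have hsd1 : 1 ≤ sd := by nlinarith [hsd_sq, hm1R, hsd_pos]
  have hrel : (Real.sqrt 2)⁻¹ * (1 / sm) = 1 / sd := by
    have h2 : (0:ℝ) ≤ 2 := by norm_num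
    have : sd = Real.sqrt 2 * sm := by
      rw [hsd_def, hsm_def, ← Real.sqrt_mul h2]
      congr 1; ring
    rw [this]
    have h2p : (0:ℝ) < Real.sqrt 2 := Real.sqrt_pos.2 (by norm_num)
    field_simp
  -- x values
  have hxd : x ⟨d - 1, hd1lt⟩ = 1 := by rw [hx]; simp
  have hxj : ∀ (jv : ℕ) (h : jv < d), jv ≠ d - 1 →
      x ⟨jv, h⟩ = if jv < m then -(1 / sm) else 0 := by
    intro jv h hne
    rw [hx]
    simp only [hdiv]
    rw [if_neg hne]
  -- inner products
  have hinner : ∀ j : Fin (d - 1), (inner ℝ (v j) x : ℝ) =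
      if (j : ℕ) < m then 1 - 1 / sd else 1 := by
    intro j
    have hjd : (j : ℕ) < d := lt_trans j.2 hd1lt
    have hjne : (j : ℕ) ≠ d - 1 := Nat.ne_of_lt j.2
    rw [PiLp.inner_apply]
    simp only [RCLike.inner_apply, conj_trivial]
    rw [Finset.sum_congr rfl fun i _ => mul_comm (x i) (v j i)]
    have step : ∀ i : Fin d, v j i * x i =
        (if (i : ℕ) = d - 1 then x i else 0) +
        (if (i : ℕ) = (j : ℕ) then (Real.sqrt 2)⁻¹ * x i else 0) := by
      intro i; rw [hv]; split_ifs <;> ring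
    rw [Finset.sum_congr rfl fun i _ => step i, Finset.sum_add_distrib,
      aux_sum_ite_eq d (d - 1) hd1lt, aux_sum_ite_eq d (j : ℕ) hjd, hxd,
      hxj (j : ℕ) hjd hjne]
    split_ifs with h
    · rw [← hrel]; ring
    · ring
  -- g values
  have hgv : ∀ j : Fin (d - 1), g (inner ℝ (v j) x : ℝ) =
      if (j : ℕ) < m then 1 / sd else 0 := by
    intro j
    rw [hinner j]
    split_ifs with h
    · have h1 : 1 / sd ≤ 1 := by
        rw [div_le_one hsd_pos]; exact hsd1
      have h0 : 0 < 1 / sd := by positivity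
      rw [hg1 _ ⟨by linarith, by linarith⟩]; ring
    · rw [hg1 1 ⟨zero_le_one, le_refl 1⟩]; ring
  -- the sum
  have hsum : ∑ j : Fin (d - 1), g (inner ℝ (v j) x : ℝ) = m * (1 / sd) := by
    rw [Finset.sum_congr rfl fun j _ => hgv j]
    exact aux_sum_ite_lt (d - 1) m (le_of_lt hmlt) (1 / sd)
  have hsum' : (1 / ((d : ℝ) - 1)) * ∑ j : Fin (d - 1), g (inner ℝ (v j) x : ℝ)
      = 1 / (2 * sd) := by
    rw [hsum, hdR]
    field_simp
  -- norm
  have hnorm : ‖x‖ ^ 2 = 2 := by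
    rw [← real_inner_self_eq_norm_sq, PiLp.inner_apply]
    simp only [RCLike.inner_apply, conj_trivial]
    have step : ∀ i : Fin d, x i * x i =
        (if (i : ℕ) = d - 1 then (1:ℝ) else 0) +
        (if (i : ℕ) < m then 1 / (m:ℝ) else 0) := by
      intro i
      rw [hx]
      simp only [hdiv]
      split_ifs with h1 h2
      · exfalso; omega
      · norm_num
      · have : sm ≠ 0 := ne_of_gt hsm_pos
        field_simp
        linarith [hsm_sq]
      · norm_num
    rw [Finset.sum_congr rfl fun i _ => step i, Finset.sum_add_distrib,
      aux_sum_ite_eq d (d - 1) hd1lt (fun _ => (1:ℝ)),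
      aux_sum_ite_lt d m (by omega) (1 / (m:ℝ))]
    field_simp
    norm_num
  -- floor bound
  have hfloor : ((d : ℝ) - 1) ≤ (k / (6 * ε)) ^ 2 := by
    have h1 : d - 1 = Nat.floor ((k / (6 * ε)) ^ 2) := by omega
    have h2 : ((d : ℝ) - 1) = ((d - 1 : ℕ) : ℝ) := by
      have : (1:ℕ) ≤ d := by omega
      push_cast [Nat.cast_sub this]; ring
    rw [h2, h1]
    exact Nat.floor_le (by positivity)
  have hsd_le : sd ≤ k / (6 * ε) := by
    have hknn : 0 ≤ k / (6 * ε) := by positivity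
    calc sd ≤ Real.sqrt ((k / (6 * ε)) ^ 2) := Real.sqrt_le_sqrt hfloor
    _ = k / (6 * ε) := Real.sqrt_sq hknn
  refine ⟨hnorm, ?_, hsum', ?_⟩
  · intro j
    constructor
    · intro h
      rw [hinner j, if_neg (by omega)]
    · intro h
      rw [hinner j, if_pos (by omega)]
  · rw [hsum', hnorm]
    have h4sd : 4 * ε * sd ≤ 2 * k / 3 := by
      have h := mul_le_mul_of_nonneg_left hsd_le (show (0:ℝ) ≤ 4 * ε by linarith)
      calc 4 * ε * sd ≤ 4 * ε * (k / (6 * ε)) := h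
      _ = 2 * k / 3 := by field_simp; ring
    have hlt : ε * (k + 4 * sd) < k := by nlinarith
    have hsub : 1 / (2 * sd) + 2 / k = (k + 4 * sd) / (2 * sd * k) := by
      field_simp
      ring
    have heq1 : ε * (1 / (2 * sd) + 2 / k) = ε * (k + 4 * sd) / (2 * sd * k) := by
      rw [hsub, mul_div_assoc]
    have heq2 : (1:ℝ) / (2 * sd) = k / (2 * sd * k) := by
      field_simp
    rw [gt_iff_lt, heq1, heq2]
    exact (div_lt_div_iff_of_pos_right (by positivity)).2 hlt
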